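/- Under the hypotheses of Theorem 1 (ξ, η : [0,∞) → ℝ⁴ differentiable; M differentiable, symmetric, with c_m‖x‖² ≤ xᵀM(t)x ≤ c_M‖x‖², 0 < c_m ≤ c_M; η(t)ᵀ(½M'(t) − C(t))η(t) = 0; xᵀB(t)x ≥ B̲‖x‖² with B̲ ≥ 1/4; ‖χ(t)‖ ≤ ρ₁ + ρ₂‖z₁(t)‖ + ρ₃‖z₁(t)‖² with ρᵢ ≥ 0; gains α, k₁, ε > 0; closed loop ξ' = η − αξ and Mη' = χ − Cη − ξ − B(k₁η + (1/ε)ρ(‖z₁‖)²η)), the trajectory is uniformly bounded: for all t ≥ 0, ‖z₁(t)‖² ≤ (1/a)(V(0) + ε/δ), where z₁(t) = (ξ(t), η(t)), V(t) = ½‖ξ(t)‖² + ½η(t)ᵀM(t)η(t), a = min(1/2, c_m/2), b = max(1/2, c_M/2), and δ = min(α, B̲k₁)/b. In particular ξ and η are bounded functions. -/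

import Mathlib

/-- The quadratic form `xᵀ A x`. -/
noncomputable def quadForm (A : Matrix (Fin 4) (Fin 4) ℝ) (x : EuclideanSpace ℝ (Fin 4)) : ℝ :=
  ∑ i, ∑ j, x i * A i j * x j

/-- The action of a matrix on a vector of `EuclideanSpace ℝ (Fin 4)` (i.e. `A x`). -/
noncomputable def mulVecE (A : Matrix (Fin 4) (Fin 4) ℝ) (x : EuclideanSpace ℝ (Fin 4)) :
    EuclideanSpace ℝ (Fin 4) :=
  (EuclideanSpace.equiv (Fin 4) ℝ).symm (A.mulVec ((EuclideanSpace.equiv (Fin 4) ℝ) x))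

/-- The stacked vector `z = (x, y) ∈ ℝ⁸` with `‖z‖² = ‖x‖² + ‖y‖²`. -/
noncomputable def stack (x y : EuclideanSpace ℝ (Fin 4)) :
    WithLp 2 (EuclideanSpace ℝ (Fin 4) × EuclideanSpace ℝ (Fin 4)) :=
  (WithLp.equiv 2 _).symm (x, y)

private lemma normsq_eq (x : EuclideanSpace ℝ (Fin 4)) : ‖x‖ ^ 2 = ∑ i, x i ^ 2 := by
  have h : ‖x‖ = Real.sqrt (∑ i, x i ^ 2) := by
    rw [EuclideanSpace.norm_eq]
    congr 1
    refine Finset.sum_congr rfl fun i _ => ?_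
    rw [Real.norm_eq_abs, sq_abs]
  rw [h, Real.sq_sqrt (by positivity)]

private lemma stack_normsq (x y : EuclideanSpace ℝ (Fin 4)) :
    ‖stack x y‖ ^ 2 = ‖x‖ ^ 2 + ‖y‖ ^ 2 := by
  rw [WithLp.prod_norm_sq_eq_of_L2]; rfl

private lemma cauchy4 (x y : EuclideanSpace ℝ (Fin 4)) : ∑ i, x i * y i ≤ ‖x‖ * ‖y‖ := by
  have := real_inner_le_norm x y
  simpa [PiLp.inner_apply, RCLike.inner_apply, mul_comm] using this

private lemma mulVecE_apply (A : Matrix (Fin 4) (Fin 4) ℝ) (x : EuclideanSpace ℝ (Fin 4))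
    (i : Fin 4) : mulVecE A x i = ∑ j, A i j * x j := by
  simp [mulVecE, Matrix.mulVec, dotProduct]

private lemma comp_deriv (f : ℝ → EuclideanSpace ℝ (Fin 4)) (f' : EuclideanSpace ℝ (Fin 4))
    (t : ℝ) (i : Fin 4) (h : HasDerivAt f f' t) : HasDerivAt (fun s => f s i) (f' i) t := by
  exact
    ((EuclideanSpace.proj i : EuclideanSpace ℝ (Fin 4) →L[ℝ] ℝ).hasFDerivAt).comp_hasDerivAt t h

private lemma decay_bound (f f' : ℝ → ℝ) (δ ε : ℝ) (hδ : 0 < δ) (hε : 0 ≤ ε)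
    (hf : ∀ t, 0 ≤ t → HasDerivAt f (f' t) t)
    (hineq : ∀ t, 0 ≤ t → f' t ≤ -δ * f t + ε)
    (hf0 : 0 ≤ f 0) : ∀ t, 0 ≤ t → f t ≤ f 0 + ε / δ := by
  set g : ℝ → ℝ := fun t => (f t - ε / δ) * Real.exp (δ * t) with hg
  have hg' : ∀ t, 0 ≤ t →
      HasDerivAt g ((f' t + δ * (f t - ε / δ)) * Real.exp (δ * t)) t := by
    intro t ht
    have h1 : HasDerivAt (fun t => f t - ε / δ) (f' t) t := (hf t ht).sub_const _
    have h2 : HasDerivAt (fun t => Real.exp (δ * t)) (δ * Real.exp (δ * t)) t := by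
      simpa [mul_comm, Function.comp_def] using (Real.hasDerivAt_exp (δ * t)).comp t ((hasDerivAt_id t).const_mul δ)
    have := h1.fun_mul h2
    rw [show (f' t + δ * (f t - ε / δ)) * Real.exp (δ * t)
      = f' t * Real.exp (δ * t) + (f t - ε / δ) * (δ * Real.exp (δ * t)) by ring]
    exact this
  have hanti : AntitoneOn g (Set.Ici (0:ℝ)) := by
    apply antitoneOn_of_deriv_nonpos (convex_Ici 0)
    · intro t ht
      exact ((hg' t ht).continuousAt).continuousWithinAt
    · intro t ht
      rw [interior_Ici] at ht
      exact ((hg' t ht.le).differentiableAt).differentiableWithinAt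
    · intro t ht
      rw [interior_Ici] at ht
      rw [(hg' t ht.le).deriv]
      have h3 := hineq t ht.le
      have h4 : δ * (ε / δ) = ε := by field_simp
      have h5 : (0:ℝ) < Real.exp (δ * t) := Real.exp_pos _
      have h6 : f' t + δ * (f t - ε / δ) ≤ 0 := by
        have : δ * (f t - ε / δ) = δ * f t - ε := by rw [mul_sub, h4]
        linarith
      exact mul_nonpos_of_nonpos_of_nonneg h6 h5.le
  intro t ht
  have hgt : g t ≤ g 0 := hanti Set.self_mem_Ici ht ht
  have hg0 : g 0 = f 0 - ε / δ := by simp [hg]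
  have hexp1 : (1:ℝ) ≤ Real.exp (δ * t) := by
    rw [Real.one_le_exp_iff]
    positivity
  have hεδ : 0 ≤ ε / δ := by positivity
  rcases le_or_gt (f t) (ε / δ) with h | h
  · linarith
  · have h7 : f t - ε / δ ≤ (f t - ε / δ) * Real.exp (δ * t) := by
      nlinarith
    rw [hg0] at hgt
    simp only [hg] at hgt
    linarith

set_option maxHeartbeats 1600000 in
/-- under the hypotheses of Theorem 1, the trajectory is uniformly
bounded: `‖z₁(t)‖² ≤ (1/a)(V(0) + ε/δ)` for all `t ≥ 0`; in particular `ξ` and `η`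
are bounded functions on `[0,∞)`. -/
theorem stmt6
    (ξ η ξd ηd : ℝ → EuclideanSpace ℝ (Fin 4))
    (hξ : ∀ t, 0 ≤ t → HasDerivAt ξ (ξd t) t) (hη : ∀ t, 0 ≤ t → HasDerivAt η (ηd t) t)
    (z₁ : ℝ → WithLp 2 (EuclideanSpace ℝ (Fin 4) × EuclideanSpace ℝ (Fin 4)))
    (hz₁ : z₁ = fun t => stack (ξ t) (η t))
    (c_m c_M : ℝ) (hcm : 0 < c_m) (hcmM : c_m ≤ c_M)
    (M Md : ℝ → Matrix (Fin 4) (Fin 4) ℝ)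
    (hM : ∀ (i j : Fin 4) (t : ℝ), 0 ≤ t → HasDerivAt (fun s => M s i j) (Md t i j) t)
    (hMsymm : ∀ t, (M t).IsSymm)
    (hMlow : ∀ t (x : EuclideanSpace ℝ (Fin 4)), c_m * ‖x‖ ^ 2 ≤ quadForm (M t) x)
    (hMhigh : ∀ t (x : EuclideanSpace ℝ (Fin 4)), quadForm (M t) x ≤ c_M * ‖x‖ ^ 2)
    (C B : ℝ → Matrix (Fin 4) (Fin 4) ℝ)
    (hskew : ∀ t, 0 ≤ t → quadForm ((1 / 2 : ℝ) • Md t - C t) (η t) = 0)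
    (Blo : ℝ) (hBlo : (1 / 4 : ℝ) ≤ Blo)
    (hB : ∀ t (x : EuclideanSpace ℝ (Fin 4)), Blo * ‖x‖ ^ 2 ≤ quadForm (B t) x)
    (ρ₁ ρ₂ ρ₃ : ℝ) (hρ₁ : 0 ≤ ρ₁) (hρ₂ : 0 ≤ ρ₂) (hρ₃ : 0 ≤ ρ₃)
    (ρ : ℝ → ℝ) (hρ : ρ = fun s => ρ₁ + ρ₂ * s + ρ₃ * s ^ 2)
    (χ : ℝ → EuclideanSpace ℝ (Fin 4)) (hχ : ∀ t, 0 ≤ t → ‖χ t‖ ≤ ρ ‖z₁ t‖)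
    (α k₁ ε : ℝ) (hα : 0 < α) (hk₁ : 0 < k₁) (hε : 0 < ε)
    (hloop₁ : ∀ t, 0 ≤ t → ξd t = η t - α • ξ t)
    (hloop₂ : ∀ t, 0 ≤ t → mulVecE (M t) (ηd t)
      = χ t - mulVecE (C t) (η t) - ξ t
        - mulVecE (B t) (k₁ • η t + ((1 / ε) * (ρ ‖z₁ t‖) ^ 2) • η t))
    (V : ℝ → ℝ)
    (hV : V = fun t => (1 / 2) * ‖ξ t‖ ^ 2 + (1 / 2) * quadForm (M t) (η t))
    (a b δ : ℝ) (ha : a = min (1 / 2) (c_m / 2)) (hb : b = max (1 / 2) (c_M / 2))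
    (hδ : δ = min α (Blo * k₁) / b) :
    (∀ t, 0 ≤ t → ‖z₁ t‖ ^ 2 ≤ (1 / a) * (V 0 + ε / δ)) ∧
      ∃ K : ℝ, ∀ t, 0 ≤ t → ‖ξ t‖ ≤ K ∧ ‖η t‖ ≤ K := by
  -- basic positivity facts
  have ha0 : 0 < a := by rw [ha]; exact lt_min (by norm_num) (by positivity)
  have hb1 : (1:ℝ)/2 ≤ b := hb ▸ le_max_left _ _
  have hb2 : c_M/2 ≤ b := hb ▸ le_max_right _ _
  have hb0 : (0:ℝ) < b := lt_of_lt_of_le (by norm_num) hb1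
  have hm0 : 0 < min α (Blo * k₁) := lt_min hα (by nlinarith)
  have hδ0 : 0 < δ := by rw [hδ]; positivity
  have ha1 : a ≤ 1/2 := ha ▸ min_le_left _ _
  have ha2 : a ≤ c_m/2 := ha ▸ min_le_right _ _
  have hm1 : min α (Blo * k₁) ≤ α := min_le_left _ _
  have hm2 : min α (Blo * k₁) ≤ Blo * k₁ := min_le_right _ _
  have hδb : δ * b = min α (Blo * k₁) := by rw [hδ]; field_simp
  -- norm of stacked vector
  have hz : ∀ t, ‖z₁ t‖ ^ 2 = ‖ξ t‖ ^ 2 + ‖η t‖ ^ 2 := by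
    intro t; rw [hz₁]; exact stack_normsq _ _
  -- ρ is nonnegative on norms
  have hr0 : ∀ t, 0 ≤ ρ ‖z₁ t‖ := by
    intro t
    rw [hρ]
    have h1 := norm_nonneg (z₁ t)
    have h2 : 0 ≤ ρ₂ * ‖z₁ t‖ := mul_nonneg hρ₂ h1
    have h3 : 0 ≤ ρ₃ * ‖z₁ t‖ ^ 2 := mul_nonneg hρ₃ (by positivity)
    simp only []
    linarith
  -- the candidate derivative of V
  set W : ℝ → ℝ := fun t =>
    (1/2) * (∑ i, (2:ℝ) * ξ t i ^ 1 * ξd t i) +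
      (1/2) * (∑ i, ∑ j, ((ηd t i * M t i j + η t i * Md t i j) * η t j
        + η t i * M t i j * ηd t j)) with hW
  -- V has derivative W on [0,∞)
  have hVd : ∀ t, 0 ≤ t → HasDerivAt V (W t) t := by
    intro t ht
    have hVeq : V = fun s => (1/2) * (∑ i, ξ s i ^ 2)
        + (1/2) * (∑ i, ∑ j, η s i * M s i j * η s j) := by
      funext s
      rw [hV]
      simp only [normsq_eq, quadForm]
    rw [hVeq]
    have hc : ∀ i : Fin 4, HasDerivAt (fun s => ξ s i) (ξd t i) t :=
      fun i => comp_deriv ξ (ξd t) t i (hξ t ht)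
    have hd : ∀ i : Fin 4, HasDerivAt (fun s => η s i) (ηd t i) t :=
      fun i => comp_deriv η (ηd t) t i (hη t ht)
    have h1 : HasDerivAt (fun s => ∑ i, ξ s i ^ 2)
        (∑ i : Fin 4, (2:ℝ) * ξ t i ^ 1 * ξd t i) t := by
      apply HasDerivAt.fun_sum
      intro i _
      simpa using (hc i).fun_pow 2
    have h2 : HasDerivAt (fun s => ∑ i, ∑ j, η s i * M s i j * η s j)
        (∑ i : Fin 4, ∑ j : Fin 4, ((ηd t i * M t i j + η t i * Md t i j) * η t j
          + η t i * M t i j * ηd t j)) t := by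
      apply HasDerivAt.fun_sum
      intro i _
      apply HasDerivAt.fun_sum
      intro j _
      exact ((hd i).mul (hM i j t ht)).mul (hd j)
    exact (h1.const_mul _).add (h2.const_mul _)
  -- identity for W on [0,∞)
  have hWid : ∀ t, 0 ≤ t → W t = -α * ‖ξ t‖ ^ 2 + (∑ i, η t i * χ t i)
      - (k₁ + (1/ε) * (ρ ‖z₁ t‖) ^ 2) * quadForm (B t) (η t) := by
    intro t ht
    set c : ℝ := (1/ε) * (ρ ‖z₁ t‖) ^ 2 with hc
    -- componentwise closed-loop equations
    have hξdi : ∀ i, ξd t i = η t i - α * ξ t i := by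
      intro i
      rw [hloop₁ t ht]
      simp [PiLp.sub_apply, PiLp.smul_apply]
    have hMdi : ∀ i, ∑ j, M t i j * ηd t j
        = χ t i - (∑ j, C t i j * η t j) - ξ t i - (k₁ + c) * ∑ j, B t i j * η t j := by
      intro i
      have h2 : mulVecE (M t) (ηd t) i = (χ t - mulVecE (C t) (η t) - ξ t
          - mulVecE (B t) (k₁ • η t + c • η t)) i := by rw [hloop₂ t ht]
      rw [mulVecE_apply] at h2
      rw [h2]
      simp only [PiLp.sub_apply, mulVecE_apply, PiLp.add_apply, PiLp.smul_apply, smul_eq_mul]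
      rw [Finset.mul_sum]
      congr 1
      refine Finset.sum_congr rfl fun j _ => ?_
      ring
    -- symmetry of M
    have hS : ∑ i, ∑ j, ηd t i * M t i j * η t j = ∑ i, ∑ j, η t i * M t i j * ηd t j := by
      rw [Finset.sum_comm]
      refine Finset.sum_congr rfl fun i _ => Finset.sum_congr rfl fun j _ => ?_
      rw [(hMsymm t).apply i j]
      ring
    -- skew condition
    have hsk : (1/2 : ℝ) * (∑ i, ∑ j, η t i * Md t i j * η t j)
        = ∑ i, ∑ j, η t i * C t i j * η t j := by
      have h := hskew t ht
      simp only [quadForm, Matrix.sub_apply, Matrix.smul_apply, smul_eq_mul] at h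
      have h2 : ∑ i : Fin 4, ∑ j : Fin 4,
          ((1/2) * (η t i * Md t i j * η t j) - η t i * C t i j * η t j) = 0 := by
        rw [← h]
        refine Finset.sum_congr rfl fun i _ => Finset.sum_congr rfl fun j _ => ?_
        ring
      rw [Finset.mul_sum]
      simp_rw [Finset.mul_sum, Finset.sum_sub_distrib] at h2 ⊢
      linarith [h2]
    -- the ξ part
    have e1 : (1/2:ℝ) * (∑ i, (2:ℝ) * ξ t i ^ 1 * ξd t i)
        = (∑ i, η t i * ξ t i) - α * ‖ξ t‖ ^ 2 := by
      rw [normsq_eq, Finset.mul_sum, Finset.mul_sum, ← Finset.sum_sub_distrib]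
      refine Finset.sum_congr rfl fun i _ => ?_
      rw [hξdi i]
      ring
    -- the η part
    have e2 : (∑ i, ∑ j, η t i * M t i j * ηd t j)
        = (∑ i, η t i * χ t i) - (∑ i, ∑ j, η t i * C t i j * η t j)
          - (∑ i, η t i * ξ t i) - (k₁ + c) * (∑ i, ∑ j, η t i * B t i j * η t j) := by
      have e3 : ∀ i, ∑ j, η t i * M t i j * ηd t j
          = η t i * χ t i - (∑ j, η t i * C t i j * η t j) - η t i * ξ t i
            - (k₁ + c) * (∑ j, η t i * B t i j * η t j) := by
        intro i
        have e4 : ∑ j, η t i * M t i j * ηd t j = η t i * (∑ j, M t i j * ηd t j) := by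
          rw [Finset.mul_sum]
          refine Finset.sum_congr rfl fun j _ => ?_
          ring
        rw [e4, hMdi i]
        have e5 : ∑ j, η t i * C t i j * η t j = η t i * ∑ j, C t i j * η t j := by
          rw [Finset.mul_sum]
          exact Finset.sum_congr rfl fun j _ => by ring
        have e6 : ∑ j, η t i * B t i j * η t j = η t i * ∑ j, B t i j * η t j := by
          rw [Finset.mul_sum]
          exact Finset.sum_congr rfl fun j _ => by ring
        rw [e5, e6]
        ring
      simp_rw [e3]
      rw [Finset.sum_sub_distrib, Finset.sum_sub_distrib, Finset.sum_sub_distrib,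
        ← Finset.mul_sum]
    -- assemble
    have esplit : ∑ i : Fin 4, ∑ j : Fin 4, ((ηd t i * M t i j + η t i * Md t i j) * η t j
          + η t i * M t i j * ηd t j)
        = (∑ i, ∑ j, ηd t i * M t i j * η t j) + (∑ i, ∑ j, η t i * Md t i j * η t j)
          + (∑ i, ∑ j, η t i * M t i j * ηd t j) := by
      rw [← Finset.sum_add_distrib, ← Finset.sum_add_distrib]
      refine Finset.sum_congr rfl fun i _ => ?_
      rw [← Finset.sum_add_distrib, ← Finset.sum_add_distrib]
      refine Finset.sum_congr rfl fun j _ => ?_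
      ring
    rw [hW]
    simp only []
    rw [esplit, e1]
    have hQB : quadForm (B t) (η t) = ∑ i, ∑ j, η t i * B t i j * η t j := rfl
    rw [hQB]
    rw [hS] at *
    linarith [hsk, e2]
  -- the differential inequality
  have hWle : ∀ t, 0 ≤ t → W t ≤ -δ * V t + ε := by
    intro t ht
    rw [hWid t ht]
    set r : ℝ := ρ ‖z₁ t‖ with hrdef
    have hr : 0 ≤ r := hr0 t
    set X : ℝ := ‖ξ t‖ ^ 2 with hX
    set Y : ℝ := ‖η t‖ ^ 2 with hY
    have hX0 : 0 ≤ X := by positivity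
    have hY0 : 0 ≤ Y := by positivity
    -- Cauchy–Schwarz and the χ bound
    have hP : ∑ i, η t i * χ t i ≤ ‖η t‖ * r := by
      calc ∑ i, η t i * χ t i ≤ ‖η t‖ * ‖χ t‖ := cauchy4 _ _
        _ ≤ ‖η t‖ * r := mul_le_mul_of_nonneg_left (hχ t ht) (norm_nonneg _)
    have hQB := hB t (η t)
    have hc0 : (0:ℝ) ≤ (1/ε) * r ^ 2 := by positivity
    -- completing the square
    have key1 : ‖η t‖ * r ≤ ε + (1/ε) * r ^ 2 * (Blo * Y) := by
      have h0 : (1/ε) * r ^ 2 * (Blo * Y) = (Blo * (r * ‖η t‖) ^ 2) * ε⁻¹ := by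
        rw [hY]; field_simp
      rw [h0]
      have h1 : (1/4 * (r * ‖η t‖) ^ 2) * ε⁻¹ ≤ (Blo * (r * ‖η t‖) ^ 2) * ε⁻¹ := by
        apply mul_le_mul_of_nonneg_right _ (by positivity)
        nlinarith [sq_nonneg (r * ‖η t‖)]
      have hmain : ‖η t‖ * r ≤ ε + (1/4 * (r * ‖η t‖) ^ 2) * ε⁻¹ := by
        rw [← sub_nonneg]
        have hid : ε + (1/4 * (r * ‖η t‖) ^ 2) * ε⁻¹ - ‖η t‖ * r
            = (r * ‖η t‖ - 2 * ε) ^ 2 / (4 * ε) := by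
          field_simp
          ring
        rw [hid]
        positivity
      linarith
    -- lower bound on the damping term
    have hq1 : k₁ * (Blo * Y) + (1/ε) * r ^ 2 * (Blo * Y)
        ≤ (k₁ + (1/ε) * r ^ 2) * quadForm (B t) (η t) := by
      have hk := mul_le_mul_of_nonneg_left hQB hk₁.le
      have hcq := mul_le_mul_of_nonneg_left hQB hc0
      rw [← hY] at hk hcq
      nlinarith
    have step1 : -α * X + (∑ i, η t i * χ t i) - (k₁ + (1/ε) * r ^ 2) * quadForm (B t) (η t)
        ≤ -α * X - k₁ * (Blo * Y) + ε := by
      linarith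
    -- min bound
    set m : ℝ := min α (Blo * k₁) with hmdef
    have step2 : -α * X - k₁ * (Blo * Y) ≤ -m * (X + Y) := by
      have h1 : m * X ≤ α * X := mul_le_mul_of_nonneg_right hm1 hX0
      have h2 : m * Y ≤ (Blo * k₁) * Y := mul_le_mul_of_nonneg_right hm2 hY0
      nlinarith
    -- relate to V
    have hVt : V t = (1/2) * X + (1/2) * quadForm (M t) (η t) := by rw [hV]
    have hMup := hMhigh t (η t)
    rw [← hY] at hMup
    have hVub : V t ≤ b * (X + Y) := by
      rw [hVt]
      nlinarith
    have step3 : -m * (X + Y) ≤ -δ * V t := by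
      have h1 : δ * V t ≤ δ * (b * (X + Y)) := mul_le_mul_of_nonneg_left hVub hδ0.le
      have h2 : δ * (b * (X + Y)) = m * (X + Y) := by rw [← mul_assoc, hδb]
      linarith
    calc -α * X + (∑ i, η t i * χ t i) - (k₁ + (1/ε) * r ^ 2) * quadForm (B t) (η t)
        ≤ -α * X - k₁ * (Blo * Y) + ε := step1
      _ ≤ -m * (X + Y) + ε := by linarith
      _ ≤ -δ * V t + ε := by linarith
  -- lower bound a‖z₁‖² ≤ V
  have hVlow : ∀ t, a * ‖z₁ t‖ ^ 2 ≤ V t := by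
    intro t
    have h1 := hMlow t (η t)
    rw [hz t, hV]
    simp only []
    have hX0 : (0:ℝ) ≤ ‖ξ t‖ ^ 2 := by positivity
    have hY0 : (0:ℝ) ≤ ‖η t‖ ^ 2 := by positivity
    nlinarith
  have hV0 : 0 ≤ V 0 := le_trans (by positivity) (hVlow 0)
  -- Gronwall
  have hbound := decay_bound V W δ ε hδ0 hε.le hVd hWle hV0
  have hfirst : ∀ t, 0 ≤ t → ‖z₁ t‖ ^ 2 ≤ (1 / a) * (V 0 + ε / δ) := by
    intro t ht
    have h1 : a * ‖z₁ t‖ ^ 2 ≤ V 0 + ε / δ := le_trans (hVlow t) (hbound t ht)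
    calc ‖z₁ t‖ ^ 2 = (1/a) * (a * ‖z₁ t‖ ^ 2) := by field_simp
      _ ≤ (1/a) * (V 0 + ε / δ) := mul_le_mul_of_nonneg_left h1 (by positivity)
  refine ⟨hfirst, Real.sqrt ((1 / a) * (V 0 + ε / δ)), fun t ht => ?_⟩
  have h1 := hfirst t ht
  have h2 := hz t
  have hX0 : (0:ℝ) ≤ ‖ξ t‖ ^ 2 := by positivity
  have hY0 : (0:ℝ) ≤ ‖η t‖ ^ 2 := by positivity
  constructor
  · have : ‖ξ t‖ ^ 2 ≤ (1 / a) * (V 0 + ε / δ) := by linarith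
    calc ‖ξ t‖ = Real.sqrt (‖ξ t‖ ^ 2) := (Real.sqrt_sq (norm_nonneg _)).symm
      _ ≤ Real.sqrt ((1 / a) * (V 0 + ε / δ)) := Real.sqrt_le_sqrt this
  · have : ‖η t‖ ^ 2 ≤ (1 / a) * (V 0 + ε / δ) := by linarith
    calc ‖η t‖ = Real.sqrt (‖η t‖ ^ 2) := (Real.sqrt_sq (norm_nonneg _)).symm
      _ ≤ Real.sqrt ((1 / a) * (V 0 + ε / δ)) := Real.sqrt_le_sqrt this
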